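/- arXiv:1811.02388 — 3 statements merged into one kernel-verified Lean document; each statement's English description precedes it below -/
import Mathlib

section
/- Let F be a field, n ≥ 1 and ω ≥ 1 integers with ω - 1 ≤ n, and let b_1, …, b_{ω-1} ∈ F^n be linearly independent column vectors. If k ∈ F^{n-1} satisfies k ∉ ⟨b_1', …, b_{ω-1}'⟩, then the vectors b_1(k), …, b_{ω-1}(k) ∈ F^{n-1} are linearly independent. -/
/-- The vector consisting of the first `n - 1` components of `v`. -/
def projv {F : Type*} [Field F] {n : ℕ} (v : Fin n → F) : Fin (n - 1) → F :=
  fun i => v (Fin.castLE (Nat.sub_le n 1) i)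

/-- The last component of `v`. -/
def lastc {F : Type*} [Field F] {n : ℕ} (hn : 0 < n) (v : Fin n → F) : F :=
  v ⟨n - 1, Nat.sub_lt hn Nat.one_pos⟩

/-- The compressed vector `v(k) = v' + v_n • k`, i.e. `[I_{n-1} k] · v`. -/
def cvec {F : Type*} [Field F] {n : ℕ} (hn : 0 < n) (k : Fin (n - 1) → F)
    (v : Fin n → F) : Fin (n - 1) → F :=
  fun i => projv v i + lastc hn v * k i

/-- The set `K_A` of forbidden compression vectors: all
`Σ αᵢ bᵢ' + Σ βₑ fₑ'` over coefficient tuples `(α, β)` with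
`Σ αᵢ b_{i,n} + Σ βₑ f_{e,n} = -1`. -/
def KSet {F : Type*} [Field F] {n : ℕ} {ι κ : Type*} [Fintype ι] [Fintype κ]
    (hn : 0 < n) (b : ι → Fin n → F) (f : κ → Fin n → F) : Set (Fin (n - 1) → F) :=
  { x | ∃ (α : ι → F) (β : κ → F),
      ((∑ i, α i * lastc hn (b i)) + ∑ e, β e * lastc hn (f e) = -1) ∧
      x = (∑ i, α i • projv (b i)) + ∑ e, β e • projv (f e) }

/-- First part of the proof of Lemma 1: if `b₁, …, b_{ω-1} ∈ Fⁿ` are linearly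
independent and `k ∈ F^{n-1}` avoids the span of the projections `bᵢ'`, then the
compressed vectors `bᵢ(k)` are linearly independent. -/
theorem compressed_linearIndependent (F : Type*) [Field F] (n ω : ℕ)
    (hn : 1 ≤ n) (hω : 1 ≤ ω) (hωn : ω - 1 ≤ n)
    (b : Fin (ω - 1) → Fin n → F) (hb : LinearIndependent F b)
    (k : Fin (n - 1) → F)
    (hk : k ∉ Submodule.span F (Set.range fun i => projv (b i))) :
    LinearIndependent F (fun i => cvec (by omega : 0 < n) k (b i)) := by
  have hn0 : 0 < n := by omega
  rw [Fintype.linearIndependent_iff] at hb ⊢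
  intro c hc
  set s : F := ∑ i, c i * lastc hn0 (b i) with hs
  have hcoord : ∀ j, (∑ i, c i * projv (b i) j) + s * k j = 0 := by
    intro j
    have := congrFun hc j
    simp only [cvec, Finset.sum_apply, Pi.smul_apply, smul_eq_mul, Pi.zero_apply] at this
    rw [hs, Finset.sum_mul]
    rw [← this, ← Finset.sum_add_distrib]
    congr 1; ext i; ring
  have hs0 : s = 0 := by
    by_contra hsne
    apply hk
    have hkeq : k = (-s)⁻¹ • ∑ i, c i • projv (b i) := by
      ext j
      have h := hcoord j
      have h2 : ∑ i, c i * projv (b i) j = -s * k j := by linear_combination h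
      simp only [Pi.smul_apply, Finset.sum_apply, smul_eq_mul]
      rw [h2, inv_mul_cancel_left₀ (neg_ne_zero.mpr hsne)]
    rw [hkeq]
    exact Submodule.smul_mem _ _ (Submodule.sum_mem _ fun i _ =>
      Submodule.smul_mem _ _ (Submodule.subset_span ⟨i, rfl⟩))
  have hzero : ∑ i, c i • b i = 0 := by
    ext j
    simp only [Finset.sum_apply, Pi.smul_apply, smul_eq_mul, Pi.zero_apply]
    rcases lt_or_ge (j : ℕ) (n - 1) with hj | hj
    · have := hcoord ⟨j, hj⟩
      rw [hs0, zero_mul, add_zero] at this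
      have heq : ∀ i, projv (b i) ⟨(j : ℕ), hj⟩ = b i j := fun i => rfl
      simp only [heq] at this
      exact this
    · have hj' : j = ⟨n - 1, Nat.sub_lt hn0 Nat.one_pos⟩ := by
        have h2 := j.2
        have hjv : (j : ℕ) = n - 1 := by omega
        exact Fin.ext hjv
      rw [hj']
      rw [hs] at hs0
      exact hs0
  exact hb c hzero
end

section
/- Let F be a field, ω ≥ 1 and r ≥ 0 integers with n = ω + r. Let b_1, …, b_{ω-1} ∈ F^n and f_e ∈ F^n (e ∈ A, |A| = r) be vectors such that the n-1 projected vectors b_1', …, b_{ω-1}', f_e' (e ∈ A) are linearly independent in F^{n-1}. Then for every k ∈ F^{n-1} with k ∉ K_A, the n-1 vectors b_1(k), …, b_{ω-1}(k), f_e(k) (e ∈ A) are linearly independent in F^{n-1}. -/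
/-- Strong per-wiretap-set form proved inside Lemma 2: if the `n - 1` projected
vectors `b₁', …, b_{ω-1}', f_e' (e ∈ A)` are linearly independent, then for every
`k ∉ K_A` the `n - 1` compressed vectors `b₁(k), …, b_{ω-1}(k), f_e(k) (e ∈ A)`
are linearly independent. -/
theorem compressed_family_linearIndependent (F : Type*) [Field F] (ω r : ℕ)
    (hω : 1 ≤ ω) (b : Fin (ω - 1) → Fin (ω + r) → F) (f : Fin r → Fin (ω + r) → F)
    (hind : LinearIndependent F
      (Sum.elim (fun i => projv (b i)) (fun e => projv (f e))))
    (k : Fin (ω + r - 1) → F) (hk : k ∉ KSet (by omega : 0 < ω + r) b f) :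
    LinearIndependent F
      (Sum.elim (fun i => cvec (by omega : 0 < ω + r) k (b i))
        (fun e => cvec (by omega : 0 < ω + r) k (f e))) := by
  have hn : 0 < ω + r := by omega
  rw [Fintype.linearIndependent_iff] at hind ⊢
  intro g hg
  set α := fun i => g (Sum.inl i) with hα
  set β := fun e => g (Sum.inr e) with hβ
  set c := (∑ i, α i * lastc hn (b i)) + ∑ e, β e * lastc hn (f e) with hc
  have hg' : ∀ j, (∑ i, α i * projv (b i) j)
      + (∑ e, β e * projv (f e) j) + c * k j = 0 := by
    intro j
    have h0 := congrFun hg j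
    simp only [Finset.sum_apply, Pi.smul_apply, Pi.zero_apply, Fintype.sum_sum_type,
      Sum.elim_inl, Sum.elim_inr, cvec, smul_eq_mul, mul_add,
      Finset.sum_add_distrib] at h0
    rw [hc, add_mul, Finset.sum_mul, Finset.sum_mul]
    simp only [mul_assoc] at h0 ⊢
    linear_combination h0
  by_cases hc0 : c = 0
  · apply hind g
    funext j
    have h1 := hg' j
    rw [hc0, zero_mul, add_zero] at h1
    simpa [Finset.sum_apply, Fintype.sum_sum_type, hα, hβ] using h1
  · exfalso
    apply hk
    refine ⟨fun i => -(α i / c), fun e => -(β e / c), ?_, ?_⟩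
    · simp only [neg_mul, div_mul_eq_mul_div, ← neg_div, ← Finset.sum_div,
        Finset.sum_neg_distrib]
      rw [← add_div, ← neg_add, ← hc, neg_div, div_self hc0]
    · funext j
      simp only [Finset.sum_apply, Pi.add_apply, Pi.smul_apply, smul_eq_mul, neg_mul,
        div_mul_eq_mul_div, ← neg_div, ← Finset.sum_div, Finset.sum_neg_distrib]
      rw [← add_div, ← neg_add]
      have h2 : (∑ i, α i * projv (b i) j) + ∑ e, β e * projv (f e) j = -(c * k j) := by
        linear_combination hg' j
      rw [h2, neg_neg, mul_comm, mul_div_assoc, div_self hc0, mul_one]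
end

section
/- Let F_q be a finite field of order q, let n, ω, r be nonnegative integers with ω ≥ 1 and n = ω + r, and let L_1, …, L_N be subspaces of F_q^n, each of dimension at most r. If q > N, then there exist linearly independent vectors b_1, …, b_ω ∈ F_q^n such that ⟨b_1, …, b_ω⟩ ∩ L_j = {0} for all j = 1, …, N. -/
open Module Submodule

/-- Range of `Fin.snoc`. -/
lemma range_snoc' {V : Type*} {m : ℕ} (v : Fin m → V) (x : V) :
    Set.range (Fin.snoc v x) = insert x (Set.range v) := by
  ext y
  constructor
  · rintro ⟨i, rfl⟩
    induction i using Fin.lastCases with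
    | last => simp
    | cast i => simp [Fin.snoc_castSucc]
  · rintro (rfl | ⟨i, rfl⟩)
    · exact ⟨Fin.last m, by simp⟩
    · exact ⟨i.castSucc, by simp [Fin.snoc_castSucc]⟩

/-- A finite vector space is not the union of `N < q` subspaces of
strictly smaller dimension. -/
lemma exists_notMem_of_lt_card {F V : Type*} [Field F] [Fintype F]
    [AddCommGroup V] [Module F V] [Fintype V] {N : ℕ}
    (W : Fin N → Submodule F V)
    (hW : ∀ j, Module.finrank F ↥(W j) < Module.finrank F V)
    (hq : N < Fintype.card F) :
    ∃ v : V, ∀ j, v ∉ W j := by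
  classical
  by_contra h
  push_neg at h
  set q := Fintype.card F with hqdef
  set d := Module.finrank F V with hd
  have hq2 : 2 ≤ q := Fintype.one_lt_card
  have hd1 : 1 ≤ d := by
    obtain ⟨j, -⟩ := h 0
    have := hW j
    omega
  -- univ is contained in the union
  have hsub : (Finset.univ : Finset V) ⊆
      Finset.univ.biUnion (fun j => (W j : Set V).toFinset) := by
    intro v _
    rcases h v with ⟨j, hj⟩
    exact Finset.mem_biUnion.mpr ⟨j, Finset.mem_univ _, Set.mem_toFinset.mpr hj⟩
  have hcardV : Fintype.card V = q ^ d := card_eq_pow_finrank (K := F)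
  have hle : Fintype.card V ≤ N * q ^ (d - 1) := by
    calc Fintype.card V = (Finset.univ : Finset V).card := by simp
    _ ≤ (Finset.univ.biUnion (fun j => (W j : Set V).toFinset)).card :=
        Finset.card_le_card hsub
    _ ≤ ∑ j, ((W j : Set V).toFinset).card := Finset.card_biUnion_le
    _ ≤ ∑ _j : Fin N, q ^ (d - 1) := by
        refine Finset.sum_le_sum fun j _ => ?_
        have : ((W j : Set V).toFinset).card = Fintype.card ↥(W j) := by
          simp [Set.toFinset_card]
        rw [this, card_eq_pow_finrank (K := F)]
        exact Nat.pow_le_pow_right (by omega) (by have := hW j; omega)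
    _ = N * q ^ (d - 1) := by simp [Finset.sum_const, mul_comm]
  have hlt : N * q ^ (d - 1) < q ^ d := by
    calc N * q ^ (d - 1) < q * q ^ (d - 1) :=
      Nat.mul_lt_mul_of_pos_right hq (Nat.pow_pos (by omega))
    _ = q ^ d := by rw [← pow_succ']; congr 1; omega
  omega

/-- Existence result underlying the Cai–Yeung secure code construction: if
`q > N` and `L₁, …, L_N` are subspaces of `F_qⁿ` of dimension at most `r`
(where `n = ω + r`, `ω ≥ 1`), then there exist linearly independent vectors
`b₁, …, b_ω` whose span intersects each `L_j` trivially. -/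
theorem exists_secure_basis (F : Type*) [Field F] [Fintype F]
    (n ω r N : ℕ) (hω : 1 ≤ ω) (hn : n = ω + r)
    (L : Fin N → Submodule F (Fin n → F))
    (hL : ∀ j, Module.finrank F ↥(L j) ≤ r)
    (hq : N < Fintype.card F) :
    ∃ b : Fin ω → Fin n → F, LinearIndependent F b ∧
      ∀ j, Submodule.span F (Set.range b) ⊓ L j = ⊥ := by
  suffices H : ∀ i, i ≤ ω → ∃ b : Fin i → Fin n → F, LinearIndependent F b ∧
      ∀ j, Submodule.span F (Set.range b) ⊓ L j = ⊥ from H ω le_rfl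
  intro i hi
  induction i with
  | zero =>
    refine ⟨Fin.elim0, linearIndependent_empty_type, fun j => ?_⟩
    simp
  | succ i ih =>
    obtain ⟨b, hb, hbL⟩ := ih (by omega)
    set W := Submodule.span F (Set.range b) with hWdef
    have hWrank : finrank F ↥W = i := by
      rw [hWdef, finrank_span_eq_card hb, Fintype.card_fin]
    have hVrank : finrank F (Fin n → F) = n := finrank_fin_fun F
    have hrank : ∀ j, finrank F ↥(W ⊔ L j) < finrank F (Fin n → F) := by
      intro j
      have := Submodule.finrank_sup_add_finrank_inf_eq W (L j)
      have := hL j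
      omega
    -- find x outside W and outside every W ⊔ L j
    have hx : ∃ x : Fin n → F, x ∉ W ∧ ∀ j, x ∉ W ⊔ L j := by
      rcases Nat.eq_zero_or_pos N with hN | hN
      · have hWne : W ≠ ⊤ := by
          intro h
          rw [h, finrank_top] at hWrank
          omega
        obtain ⟨x, -, hxW⟩ := SetLike.exists_of_lt ((lt_of_le_of_ne le_top hWne : W < ⊤))
        exact ⟨x, hxW, fun j => absurd j.2 (by omega)⟩
      · obtain ⟨x, hx⟩ := exists_notMem_of_lt_card (fun j => W ⊔ L j) hrank hq
        refine ⟨x, fun hxW => hx ⟨0, hN⟩ (Submodule.mem_sup_left hxW), hx⟩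
    obtain ⟨x, hxW, hxL⟩ := hx
    refine ⟨Fin.snoc b x, linearIndependent_fin_snoc.mpr ⟨hb, hxW⟩, fun j => ?_⟩
    rw [eq_bot_iff]
    rintro y hy
    rw [Submodule.mem_inf] at hy
    obtain ⟨hy1, hy2⟩ := hy
    rw [range_snoc', Submodule.mem_span_insert] at hy1
    obtain ⟨a, z, hz, rfl⟩ := hy1
    rcases eq_or_ne a 0 with rfl | ha
    · rw [zero_smul, zero_add] at hy2 ⊢
      have : z ∈ W ⊓ L j := ⟨hz, hy2⟩
      rw [hbL j] at this
      exact this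
    · exfalso
      apply hxL j
      have hmem : a • x + z - z ∈ W ⊔ L j :=
        Submodule.sub_mem _ (Submodule.mem_sup_right hy2) (Submodule.mem_sup_left hz)
      have : a • x ∈ W ⊔ L j := by simpa using hmem
      have := Submodule.smul_mem _ a⁻¹ this
      rwa [smul_smul, inv_mul_cancel₀ ha, one_smul] at this
end
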